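/- Let k and k' be fields containing F_p, with φ: k ⊗_{F_p} k' → k ⊗_{F_p} k' the map x ⊗ y ↦ x^p ⊗ y (Frobenius on the first factor, identity on the second). Then φ is injective. -/

import Mathlib

open scoped TensorProduct

/-- The Frobenius `x ↦ x ^ p` as a `ZMod p`-algebra homomorphism. -/
noncomputable def frobAlgHom (p : ℕ) [Fact p.Prime] (k : Type*) [CommRing k]
    [Algebra (ZMod p) k] [CharP k p] : k →ₐ[ZMod p] k :=
  AlgHom.mk' (frobenius k p) (fun c x => by
    simp only [Algebra.smul_def, map_mul]
    congr 1
    rw [frobenius_def, ← map_pow, ZMod.pow_card])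

/-- The partial Frobenius `x ⊗ y ↦ x ^ p ⊗ y` on `k ⊗[𝔽_p] k'` is injective. -/
theorem partialFrobenius_injective (p : ℕ) [Fact p.Prime] (k k' : Type*)
    [Field k] [Field k'] [Algebra (ZMod p) k] [Algebra (ZMod p) k']
    [CharP k p] [CharP k' p] :
    Function.Injective
      (Algebra.TensorProduct.map (frobAlgHom p k) (AlgHom.id (ZMod p) k')) := by
  have h : Function.Injective (LinearMap.rTensor k' (frobAlgHom p k).toLinearMap) :=
    Module.Flat.rTensor_preserves_injective_linearMap _ (frobenius_inj k p)
  intro x y hxy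
  apply h
  have e : ∀ z, Algebra.TensorProduct.map (frobAlgHom p k) (AlgHom.id (ZMod p) k') z =
      LinearMap.rTensor k' (frobAlgHom p k).toLinearMap z := fun z => by
    induction z using TensorProduct.induction_on with
    | zero => simp
    | tmul a b => simp
    | add a b ha hb => rw [map_add, map_add, ha, hb]
  rw [e, e] at hxy
  exact hxy
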